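/- If p and q are nonempty words over an alphabet Σ and the concatenation pq is a primitive word, then the two-element set {p, q} is a code. -/

import Mathlib

/-- `wpow v n` is the word `vⁿ`, the `n`-fold concatenation of the word `v` with itself. -/
def wpow {α : Type*} (v : List α) : ℕ → List α
  | 0 => []
  | n + 1 => v ++ wpow v n

/-- A nonempty word `u` is primitive if `u = vⁿ` implies `n = 1`. -/
def Primitive {α : Type*} (u : List α) : Prop :=
  u ≠ [] ∧ ∀ (v : List α) (n : ℕ), u = wpow v n → n = 1

/-- A set of words `C` is a code if any two factorizations of a word into elements
of `C` coincide. -/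
def IsCode {α : Type*} (C : Set (List α)) : Prop :=
  ∀ l₁ l₂ : List (List α), (∀ u ∈ l₁, u ∈ C) → (∀ v ∈ l₂, v ∈ C) →
    l₁.flatten = l₂.flatten → l₁ = l₂

lemma wpow_add {α : Type*} (v : List α) (m n : ℕ) :
    wpow v (m + n) = wpow v m ++ wpow v n := by
  induction m with
  | zero => simp [wpow]
  | succ m ih =>
      have : m + 1 + n = (m + n) + 1 := by omega
      rw [this]
      simp [wpow, ih]

lemma subst_lemma {α : Type*} (p q t : List α) (hq : q = p ++ t) (L : List (List α))
    (hL : ∀ u ∈ L, u = p ∨ u = q) :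
    ∃ M : List (List α), (∀ u ∈ M, u = p ∨ u = t) ∧ M.flatten = L.flatten := by
  induction L with
  | nil => exact ⟨[], by simp, rfl⟩
  | cons u L' ih =>
      obtain ⟨M', hM', hflat⟩ := ih (fun w hw => hL w (List.mem_cons_of_mem _ hw))
      rcases hL u (List.mem_cons_self) with rfl | rfl
      · exact ⟨u :: M', by
          intro w hw
          rcases List.mem_cons.1 hw with rfl | hw
          · exact Or.inl rfl
          · exact hM' w hw, by simp [hflat]⟩
      · refine ⟨p :: t :: M', ?_, ?_⟩
        · intro w hw
          rcases List.mem_cons.1 hw with rfl | hw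
          · exact Or.inl rfl
          rcases List.mem_cons.1 hw with rfl | hw
          · exact Or.inr rfl
          · exact hM' w hw
        · simp [hflat, hq]

lemma key {α : Type*} : ∀ n (p q : List α), p ≠ [] → q ≠ [] → p.length + q.length ≤ n →
    (∃ A B : List (List α), (∀ u ∈ A, u = p ∨ u = q) ∧ (∀ u ∈ B, u = p ∨ u = q) ∧
      p ++ A.flatten = q ++ B.flatten) → p ++ q = q ++ p := by
  intro n
  induction n using Nat.strong_induction_on with
  | _ n ih =>
    rintro p q hp hq hlen ⟨A, B, hA, hB, heq⟩
    have hp1 : 1 ≤ p.length := List.length_pos_iff.2 hp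
    have hq1 : 1 ≤ q.length := List.length_pos_iff.2 hq
    rw [List.append_eq_append_iff] at heq
    rcases heq with ⟨t, hq', hAB⟩ | ⟨t, hp', hBA⟩
    · -- q = p ++ t, A.flatten = t ++ B.flatten
      rcases eq_or_ne t [] with rfl | ht
      · simp at hq'; rw [hq']
      · -- A nonempty
        have hAne : A ≠ [] := by
          intro h0
          rw [h0] at hAB
          exact ht (List.append_eq_nil_iff.1 hAB.symm).1
        obtain ⟨u, A', rfl⟩ := List.exists_cons_of_ne_nil hAne
        have heq' : u ++ A'.flatten = t ++ B.flatten := by simpa using hAB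
        obtain ⟨A₂, hA₂, hA₂f⟩ := subst_lemma p q t hq' A'
          (fun w hw => hA w (List.mem_cons_of_mem _ hw))
        obtain ⟨B₂, hB₂, hB₂f⟩ := subst_lemma p q t hq' B hB
        have hqlen : q.length = p.length + t.length := by simp [hq']
        have hlt : p.length + t.length < n := by omega
        have hpt : p ++ t = t ++ p := by
          rcases hA u (List.mem_cons_self) with hu | hu
          · rw [hu] at heq'
            exact ih _ hlt p t hp ht le_rfl
              ⟨A₂, B₂, hA₂, hB₂, by rw [hA₂f, hB₂f]; exact heq'⟩
          · rw [hu, hq'] at heq'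
            refine ih _ hlt p t hp ht le_rfl
              ⟨t :: A₂, B₂, ?_, hB₂, ?_⟩
            · intro w hw
              rcases List.mem_cons.1 hw with rfl | hw
              · exact Or.inr rfl
              · exact hA₂ w hw
            · show p ++ (t ++ A₂.flatten) = t ++ B₂.flatten
              rw [hA₂f, hB₂f, ← List.append_assoc]
              exact heq'
        rw [hq', List.append_assoc, ← hpt, ← List.append_assoc]
    · -- p = q ++ t, B.flatten = t ++ A.flatten : symmetric
      rcases eq_or_ne t [] with rfl | ht
      · simp at hp'; rw [hp']
      · have hBne : B ≠ [] := by
          intro h0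
          rw [h0] at hBA
          exact ht (List.append_eq_nil_iff.1 hBA.symm).1
        obtain ⟨u, B', rfl⟩ := List.exists_cons_of_ne_nil hBne
        have heq' : u ++ B'.flatten = t ++ A.flatten := by simpa using hBA
        have hB' : ∀ w ∈ B', w = q ∨ w = p := fun w hw =>
          (hB w (List.mem_cons_of_mem _ hw)).symm
        have hA' : ∀ w ∈ A, w = q ∨ w = p := fun w hw => (hA w hw).symm
        obtain ⟨B₂, hB₂, hB₂f⟩ := subst_lemma q p t hp' B' hB'
        obtain ⟨A₂, hA₂, hA₂f⟩ := subst_lemma q p t hp' A hA'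
        have hplen : p.length = q.length + t.length := by simp [hp']
        have hlt : q.length + t.length < n := by omega
        have hqt : q ++ t = t ++ q := by
          rcases hB u (List.mem_cons_self) with hu | hu
          · rw [hu, hp'] at heq'
            refine ih _ hlt q t hq ht le_rfl
              ⟨t :: B₂, A₂, ?_, hA₂, ?_⟩
            · intro w hw
              rcases List.mem_cons.1 hw with rfl | hw
              · exact Or.inr rfl
              · exact hB₂ w hw
            · show q ++ (t ++ B₂.flatten) = t ++ A₂.flatten
              rw [hB₂f, hA₂f, ← List.append_assoc]
              exact heq'
          · rw [hu] at heq'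
            exact ih _ hlt q t hq ht le_rfl
              ⟨B₂, A₂, hB₂, hA₂, by rw [hB₂f, hA₂f]; exact heq'⟩
        rw [hp', List.append_assoc, ← hqt, ← List.append_assoc]

lemma comm_pow {α : Type*} : ∀ n (p q : List α), p.length + q.length ≤ n →
    p ++ q = q ++ p → ∃ v a b, p = wpow v a ∧ q = wpow v b := by
  intro n
  induction n using Nat.strong_induction_on with
  | _ n ih =>
    intro p q hlen hcomm
    rcases eq_or_ne p [] with rfl | hp
    · exact ⟨q, 0, 1, rfl, by simp [wpow]⟩
    rcases eq_or_ne q [] with rfl | hq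
    · exact ⟨p, 1, 0, by simp [wpow], rfl⟩
    have hp1 : 1 ≤ p.length := List.length_pos_iff.2 hp
    have hq1 : 1 ≤ q.length := List.length_pos_iff.2 hq
    rw [List.append_eq_append_iff] at hcomm
    rcases hcomm with ⟨t, h1, h2⟩ | ⟨t, h1, h2⟩
    · -- q = p ++ t and q = t ++ p
      have hpt : p ++ t = t ++ p := by rw [← h1, ← h2]
      have hqlen : q.length = p.length + t.length := by simp [h1]
      obtain ⟨v, a, b, hpv, htv⟩ := ih (p.length + t.length) (by omega) p t le_rfl hpt
      exact ⟨v, a, a + b, hpv, by rw [h1, hpv, htv, wpow_add]⟩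
    · -- p = q ++ t and p = t ++ q
      have hqt : q ++ t = t ++ q := by rw [← h1, ← h2]
      have hplen : p.length = q.length + t.length := by simp [h1]
      obtain ⟨v, a, b, hqv, htv⟩ := ih (q.length + t.length) (by omega) q t le_rfl hqt
      exact ⟨v, a + b, a, by rw [h1, hqv, htv, wpow_add], hqv⟩

lemma wpow_ne_nil_pos {α : Type*} {v : List α} {a : ℕ} (h : wpow v a ≠ []) : 1 ≤ a := by
  cases a with
  | zero => exact absurd rfl h
  | succ a => omega

/-- If `pq` is primitive for nonempty words `p, q`, then `{p, q}` is a code. -/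
theorem code_of_primitive_cat {α : Type*} (p q : List α)
    (hp : p ≠ []) (hq : q ≠ []) (h : Primitive (p ++ q)) :
    IsCode ({p, q} : Set (List α)) := by
  have hmem : ∀ u : List α, u ∈ ({p, q} : Set (List α)) → u = p ∨ u = q := by
    intro u hu
    simpa [Set.mem_insert_iff, Set.mem_singleton_iff] using hu
  have hnc : p ++ q ≠ q ++ p := by
    intro hcomm
    obtain ⟨v, a, b, hpv, hqv⟩ := comm_pow (p.length + q.length) p q le_rfl hcomm
    have ha : 1 ≤ a := wpow_ne_nil_pos (hpv ▸ hp)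
    have hb : 1 ≤ b := wpow_ne_nil_pos (hqv ▸ hq)
    have : p ++ q = wpow v (a + b) := by rw [wpow_add, hpv, hqv]
    have := h.2 v (a + b) this
    omega
  intro l₁ l₂ h1 h2 hflat
  induction l₁ generalizing l₂ with
  | nil =>
      cases l₂ with
      | nil => rfl
      | cons v t₂ =>
          exfalso
          have hv : v ≠ [] := by
            rcases hmem v (h2 v (List.mem_cons_self)) with h' | h' <;>
              (rw [h']; assumption)
          have : v ++ t₂.flatten = [] := by simpa using hflat.symm
          exact hv (List.append_eq_nil_iff.1 this).1
  | cons u t₁ ih =>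
      cases l₂ with
      | nil =>
          exfalso
          have hu : u ≠ [] := by
            rcases hmem u (h1 u (List.mem_cons_self)) with h' | h' <;>
              (rw [h']; assumption)
          have : u ++ t₁.flatten = [] := by simpa using hflat
          exact hu (List.append_eq_nil_iff.1 this).1
      | cons v t₂ =>
          have hflat' : u ++ t₁.flatten = v ++ t₂.flatten := by simpa using hflat
          have ht₁ : ∀ w ∈ t₁, w = p ∨ w = q :=
            fun w hw => hmem w (h1 w (List.mem_cons_of_mem _ hw))
          have ht₂ : ∀ w ∈ t₂, w = p ∨ w = q :=
            fun w hw => hmem w (h2 w (List.mem_cons_of_mem _ hw))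
          by_cases huv : u = v
          · subst huv
            have := ih t₂ (fun w hw => h1 w (List.mem_cons_of_mem _ hw))
              (fun w hw => h2 w (List.mem_cons_of_mem _ hw))
              (List.append_cancel_left hflat')
            rw [this]
          · rcases hmem u (h1 u (List.mem_cons_self)) with hu | hu <;>
              rcases hmem v (h2 v (List.mem_cons_self)) with hv | hv
            · exact absurd (hu.trans hv.symm) huv
            · rw [hu, hv] at hflat'
              exact absurd (key (p.length + q.length) p q hp hq le_rfl
                ⟨t₁, t₂, ht₁, ht₂, hflat'⟩) hnc
            · rw [hu, hv] at hflat'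
              exact absurd (key (p.length + q.length) p q hp hq le_rfl
                ⟨t₂, t₁, ht₂, ht₁, hflat'.symm⟩) hnc
            · exact absurd (hu.trans hv.symm) huv
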